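/- arXiv:1411.4027 — 2 statements merged into one kernel-verified Lean document; each statement's English description precedes it below -/
import Mathlib

section
/- Quantitative inverse function theorem: Let X and Y be Banach spaces, U ⊆ X an open set, and f : X → Y continuously Fréchet differentiable on U. Let x₀ ∈ U and y₀ = f(x₀), and let η, σ, L > 0. Assume: (i) ‖y₀‖_Y < η; (ii) the Fréchet derivative δf(x₀) : X → Y is an invertible bounded linear map with ‖δf(x₀)⁻¹‖ < σ; (iii) the open ball B_{2ησ}(x₀) is contained in U; (iv) δf is Lipschitz continuous on B_{2ησ}(x₀) with Lipschitz constant L; and (v) 2Lησ² < 1. Then there exists a unique continuously differentiable function g : B_η(y₀) → B_{2ησ}(x₀) such that g(y₀) = x₀ and f(g(y)) = y for all y ∈ B_η(y₀). -/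
open Metric Set Filter

lemma taylor_aux {X Y : Type*} [NormedAddCommGroup X] [NormedSpace ℝ X]
    [NormedAddCommGroup Y] [NormedSpace ℝ Y]
    {f : X → Y} {f' : X → X →L[ℝ] Y} {x₀ x : X} {r L : ℝ} (hL : 0 ≤ L)
    (hderiv : ∀ z ∈ ball x₀ r, HasFDerivAt f (f' z) z)
    (hLip : ∀ u ∈ ball x₀ r, ∀ v ∈ ball x₀ r, ‖f' u - f' v‖ ≤ L * ‖u - v‖)
    (hx : x ∈ ball x₀ r) :
    ‖f x - f x₀ - f' x₀ (x - x₀)‖ ≤ L / 2 * ‖x - x₀‖ ^ 2 := by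
  have hx' : ‖x - x₀‖ < r := by rwa [mem_ball, dist_eq_norm] at hx
  have hx₀ : x₀ ∈ ball x₀ r := mem_ball_self (lt_of_le_of_lt (norm_nonneg _) hx')
  set v := x - x₀ with hv
  have hmem : ∀ t ∈ Icc (0:ℝ) 1, x₀ + t • v ∈ ball x₀ r := by
    intro t ht
    rw [mem_ball, dist_eq_norm]
    have h1 : ‖x₀ + t • v - x₀‖ = t * ‖v‖ := by
      rw [add_sub_cancel_left, norm_smul, Real.norm_of_nonneg ht.1]
    rw [h1]
    calc t * ‖v‖ ≤ 1 * ‖v‖ := by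
          apply mul_le_mul_of_nonneg_right ht.2 (norm_nonneg _)
      _ < r := by rwa [one_mul]
  set g : ℝ → Y := fun t => f (x₀ + t • v) - f x₀ - t • (f' x₀ v) with hg
  have hgderiv : ∀ t ∈ Icc (0:ℝ) 1, HasDerivAt g ((f' (x₀ + t • v)) v - f' x₀ v) t := by
    intro t ht
    have h1 : HasDerivAt (fun t : ℝ => x₀ + t • v) v t := by
      simpa using ((hasDerivAt_id t).smul_const v).const_add x₀
    have h2 : HasDerivAt (fun t => f (x₀ + t • v)) (f' (x₀ + t • v) v) t :=
      (hderiv _ (hmem t ht)).comp_hasDerivAt t h1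
    have h3 : HasDerivAt (fun t : ℝ => t • (f' x₀ v)) (f' x₀ v) t := by
      simpa using (hasDerivAt_id t).smul_const (f' x₀ v)
    exact (h2.sub_const (f x₀)).sub h3
  have hcontg : ContinuousOn g (Icc (0:ℝ) 1) :=
    fun t ht => (hgderiv t ht).continuousAt.continuousWithinAt
  have hderivg : ∀ t ∈ Ico (0:ℝ) 1,
      HasDerivWithinAt g ((f' (x₀ + t • v)) v - (f' x₀) v) (Ici t) t :=
    fun t ht => (hgderiv t (Ico_subset_Icc_self ht)).hasDerivWithinAt
  have ha0 : ‖g 0‖ ≤ L * ‖v‖ ^ 2 * ((0:ℝ) ^ 2 / 2) := by simp [hg]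
  have hB : ∀ t : ℝ, HasDerivAt (fun t : ℝ => L * ‖v‖ ^ 2 * (t ^ 2 / 2)) (L * ‖v‖ ^ 2 * t) t := by
    intro t
    have h := ((hasDerivAt_pow 2 t).div_const 2).const_mul (L * ‖v‖ ^ 2)
    refine h.congr_deriv ?_
    rw [show (2:ℕ) - 1 = 1 from rfl, pow_one]
    push_cast
    ring
  have hbound : ∀ t ∈ Ico (0:ℝ) 1, ‖(f' (x₀ + t • v)) v - (f' x₀) v‖ ≤ L * ‖v‖ ^ 2 * t := by
    intro t ht
    have h1 : (f' (x₀ + t • v)) v - (f' x₀) v = (f' (x₀ + t • v) - f' x₀) v := by simp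
    rw [h1]
    calc ‖(f' (x₀ + t • v) - f' x₀) v‖ ≤ ‖f' (x₀ + t • v) - f' x₀‖ * ‖v‖ :=
          (f' (x₀ + t • v) - f' x₀).le_opNorm v
      _ ≤ (L * ‖x₀ + t • v - x₀‖) * ‖v‖ := by
          apply mul_le_mul_of_nonneg_right _ (norm_nonneg _)
          exact hLip _ (hmem t ⟨ht.1, ht.2.le⟩) _ hx₀
      _ = L * ‖v‖ ^ 2 * t := by
          rw [add_sub_cancel_left, norm_smul, Real.norm_of_nonneg ht.1]
          ring
  have key : ∀ t ∈ Icc (0:ℝ) 1, ‖g t‖ ≤ L * ‖v‖ ^ 2 * (t ^ 2 / 2) := fun t ht =>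
    image_norm_le_of_norm_deriv_right_le_deriv_boundary hcontg hderivg ha0 hB hbound ht
  have := key 1 ⟨zero_le_one, le_rfl⟩
  simp only [hg, one_smul] at this
  have hx1 : x₀ + v = x := by rw [hv]; abel
  rw [hx1] at this
  calc ‖f x - f x₀ - f' x₀ v‖ ≤ L * ‖v‖ ^ 2 * (1 ^ 2 / 2) := this
    _ = L / 2 * ‖v‖ ^ 2 := by ring


/-- Quantitative inverse function theorem: under quantitative bounds on the residual,
the inverse of the derivative, and the Lipschitz constant of the derivative, there is a
unique continuously differentiable local inverse `g : B_η(y₀) → B_{2ησ}(x₀)` with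
`g y₀ = x₀` and `f (g y) = y` on `B_η(y₀)` (where `y₀ = f x₀`). -/
theorem quantitative_inverse_function_theorem
    {X Y : Type*} [NormedAddCommGroup X] [NormedSpace ℝ X] [CompleteSpace X]
    [NormedAddCommGroup Y] [NormedSpace ℝ Y] [CompleteSpace Y]
    (U : Set X) (hU : IsOpen U)
    (f : X → Y) (f' : X → X →L[ℝ] Y)
    (hderiv : ∀ x ∈ U, HasFDerivAt f (f' x) x)
    (hcont : ContinuousOn f' U)
    (x₀ : X) (hx₀ : x₀ ∈ U)
    (η σ L : ℝ) (hη : 0 < η) (hσ : 0 < σ) (hL : 0 < L)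
    -- (i) the residual is small: `‖y₀‖ < η`
    (hres : ‖f x₀‖ < η)
    -- (ii) `δf(x₀)` is invertible with `‖δf(x₀)⁻¹‖ < σ`
    (A : Y →L[ℝ] X)
    (hA₁ : ∀ x : X, A (f' x₀ x) = x) (hA₂ : ∀ y : Y, f' x₀ (A y) = y)
    (hAnorm : ‖A‖ < σ)
    -- (iii) `B_{2ησ}(x₀) ⊆ U`
    (hball : ball x₀ (2 * η * σ) ⊆ U)
    -- (iv) `δf` is Lipschitz on `B_{2ησ}(x₀)` with constant `L`
    (hLip : ∀ u ∈ ball x₀ (2 * η * σ), ∀ v ∈ ball x₀ (2 * η * σ),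
      ‖f' u - f' v‖ ≤ L * ‖u - v‖)
    -- (v) `2Lησ² < 1`
    (hsmall : 2 * L * η * σ ^ 2 < 1) :
    ∃ g : Y → X,
      (ContDiffOn ℝ 1 g (ball (f x₀) η) ∧
        Set.MapsTo g (ball (f x₀) η) (ball x₀ (2 * η * σ)) ∧
        g (f x₀) = x₀ ∧
        ∀ y ∈ ball (f x₀) η, f (g y) = y) ∧
      ∀ g₂ : Y → X,
        (ContDiffOn ℝ 1 g₂ (ball (f x₀) η) ∧
          Set.MapsTo g₂ (ball (f x₀) η) (ball x₀ (2 * η * σ)) ∧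
          g₂ (f x₀) = x₀ ∧
          ∀ y ∈ ball (f x₀) η, f (g₂ y) = y) →
        ∀ y ∈ ball (f x₀) η, g₂ y = g y := by
  classical
  have hσ0 : (0:ℝ) ≤ σ := hσ.le
  set r : ℝ := 2 * η * σ with hr
  have hrpos : 0 < r := by positivity
  have hAσ : ‖A‖ ≤ σ := hAnorm.le
  have hderiv' : ∀ z ∈ ball x₀ r, HasFDerivAt f (f' z) z := fun z hz => hderiv z (hball hz)
  have hx₀r : x₀ ∈ ball x₀ r := mem_ball_self hrpos
  -- mean value estimate
  have hmvt : ∀ ρ : ℝ, ∀ s : Set X, s ⊆ ball x₀ r → Convex ℝ s → (∀ z ∈ s, ‖z - x₀‖ ≤ ρ) →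
      ∀ a ∈ s, ∀ b ∈ s, ‖f b - f a - (f' x₀) (b - a)‖ ≤ (L * ρ) * ‖b - a‖ := by
    intro ρ s hsub hconv hρ a ha b hb
    have hbound : ∀ z ∈ s, ‖f' z - f' x₀‖ ≤ L * ρ := by
      intro z hz
      calc ‖f' z - f' x₀‖ ≤ L * ‖z - x₀‖ := hLip _ (hsub hz) _ hx₀r
        _ ≤ L * ρ := mul_le_mul_of_nonneg_left (hρ z hz) hL.le
    exact hconv.norm_image_sub_le_of_norm_hasFDerivWithin_le'
      (fun z hz => (hderiv' z (hsub hz)).hasFDerivWithinAt) hbound ha hb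
  -- injectivity on the big ball
  have hinj : ∀ a ∈ ball x₀ r, ∀ b ∈ ball x₀ r, f a = f b → a = b := by
    intro a ha b hb hfab
    have h1 : ‖f b - f a - (f' x₀) (b - a)‖ ≤ (L * r) * ‖b - a‖ := by
      apply hmvt r (ball x₀ r) subset_rfl (convex_ball _ _) (fun z hz => ?_) a ha b hb
      rw [mem_ball, dist_eq_norm] at hz
      exact hz.le
    have h0 : f b - f a = 0 := by rw [hfab, sub_self]
    have h2 : ‖b - a‖ ≤ ‖A‖ * ((L * r) * ‖b - a‖) := by
      conv_lhs => rw [← hA₁ (b - a)]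
      calc ‖A ((f' x₀) (b - a))‖ ≤ ‖A‖ * ‖(f' x₀) (b - a)‖ := A.le_opNorm _
        _ ≤ ‖A‖ * ((L * r) * ‖b - a‖) := by
            apply mul_le_mul_of_nonneg_left _ (norm_nonneg A)
            have he : (f' x₀) (b - a) = -(f b - f a - (f' x₀) (b - a)) := by
              rw [h0]; abel
            rw [he, norm_neg]; exact h1
    have h3 : ‖A‖ * (L * r) < 1 := by
      calc ‖A‖ * (L * r) ≤ σ * (L * r) := by
            apply mul_le_mul_of_nonneg_right hAσ (by positivity)
        _ = 2 * L * η * σ ^ 2 := by rw [hr]; ring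
        _ < 1 := hsmall
    have h4 : ‖b - a‖ = 0 := by nlinarith [norm_nonneg (b - a)]
    have h5 : b - a = 0 := norm_eq_zero.mp h4
    exact (sub_eq_zero.mp h5).symm
  -- existence of preimages
  have hex : ∀ y ∈ ball (f x₀) η, ∃ x, x ∈ ball x₀ r ∧ f x = y := by
    intro y hy
    have hdη : ‖y - f x₀‖ < η := by rwa [mem_ball, dist_eq_norm] at hy
    set d : ℝ := ‖y - f x₀‖ with hd
    have hd0 : 0 ≤ d := norm_nonneg _
    set ρ : ℝ := 2 * σ * d with hρ
    have hρ0 : 0 ≤ ρ := by positivity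
    have hρr : ρ < r := by rw [hρ, hr]; nlinarith
    have hsub : closedBall x₀ ρ ⊆ ball x₀ r := closedBall_subset_ball hρr
    set Φ : X → X := fun x => x - A (f x - y) with hΦ
    have hΦeq : ∀ a b : X, Φ a - Φ b = A ((f' x₀) (a - b) - (f a - f b)) := by
      intro a b
      simp only [hΦ, map_sub, hA₁]
      abel
    have hmaps : Set.MapsTo Φ (closedBall x₀ ρ) (closedBall x₀ ρ) := by
      intro x hx
      have hxb : x ∈ ball x₀ r := hsub hx
      have hxρ : ‖x - x₀‖ ≤ ρ := by rwa [mem_closedBall, dist_eq_norm] at hx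
      have htaylor : ‖f x - f x₀ - (f' x₀) (x - x₀)‖ ≤ L / 2 * ‖x - x₀‖ ^ 2 :=
        taylor_aux hL.le hderiv' hLip hxb
      have heq : Φ x - x₀ = A ((f' x₀) (x - x₀) - (f x - f x₀)) + A (y - f x₀) := by
        simp only [hΦ, map_sub, hA₁]
        abel
      have hnorm : ‖Φ x - x₀‖ ≤ ‖A‖ * (L / 2 * ‖x - x₀‖ ^ 2) + ‖A‖ * d := by
        rw [heq]
        calc ‖A ((f' x₀) (x - x₀) - (f x - f x₀)) + A (y - f x₀)‖
            ≤ ‖A ((f' x₀) (x - x₀) - (f x - f x₀))‖ + ‖A (y - f x₀)‖ := norm_add_le _ _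
          _ ≤ ‖A‖ * ‖(f' x₀) (x - x₀) - (f x - f x₀)‖ + ‖A‖ * ‖y - f x₀‖ :=
              add_le_add (A.le_opNorm _) (A.le_opNorm _)
          _ ≤ ‖A‖ * (L / 2 * ‖x - x₀‖ ^ 2) + ‖A‖ * d := by
              refine add_le_add ?_ le_rfl
              apply mul_le_mul_of_nonneg_left _ (norm_nonneg A)
              rw [norm_sub_rev]
              exact htaylor
      rw [mem_closedBall, dist_eq_norm]
      have hsq : ‖x - x₀‖ ^ 2 ≤ ρ ^ 2 := by
        apply pow_le_pow_left₀ (norm_nonneg _) hxρ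
      calc ‖Φ x - x₀‖ ≤ ‖A‖ * (L / 2 * ‖x - x₀‖ ^ 2) + ‖A‖ * d := hnorm
        _ ≤ σ * (L / 2 * ρ ^ 2) + σ * d := by
            apply add_le_add
            · exact mul_le_mul hAσ (mul_le_mul_of_nonneg_left hsq (by positivity))
                (by positivity) hσ0
            · exact mul_le_mul_of_nonneg_right hAσ hd0
        _ ≤ ρ := by
            rw [hρ]
            nlinarith [mul_nonneg (mul_nonneg hσ0 hd0) (sub_nonneg.mpr hsmall.le),
              mul_nonneg (mul_nonneg (mul_nonneg hL.le
                (mul_nonneg hσ0 (mul_nonneg hσ0 hσ0))) hd0) (sub_nonneg.mpr hdη.le)]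
    have hK : (0:ℝ) ≤ 2 * L * η * σ ^ 2 := by positivity
    have hcontract : ContractingWith ⟨2 * L * η * σ ^ 2, hK⟩ (hmaps.restrict Φ _ _) := by
      constructor
      · exact_mod_cast hsmall
      · apply LipschitzWith.of_dist_le_mul
        rintro ⟨a, ha⟩ ⟨b, hb⟩
        have haρ : ‖a - x₀‖ ≤ ρ := by rwa [mem_closedBall, dist_eq_norm] at ha
        have hbρ : ‖b - x₀‖ ≤ ρ := by rwa [mem_closedBall, dist_eq_norm] at hb
        rw [Subtype.dist_eq, Subtype.dist_eq]
        show dist (Φ a) (Φ b) ≤ _ * dist a b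
        rw [dist_eq_norm, dist_eq_norm]
        have h2 : ‖f a - f b - (f' x₀) (a - b)‖ ≤ (L * ρ) * ‖a - b‖ := by
          apply hmvt ρ (closedBall x₀ ρ) hsub (convex_closedBall _ _) _ b hb a ha
          intro z hz
          rwa [mem_closedBall, dist_eq_norm] at hz
        calc ‖Φ a - Φ b‖ = ‖A ((f' x₀) (a - b) - (f a - f b))‖ := by rw [hΦeq]
          _ ≤ ‖A‖ * ‖(f' x₀) (a - b) - (f a - f b)‖ := A.le_opNorm _
          _ ≤ ‖A‖ * ((L * ρ) * ‖a - b‖) := by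
              apply mul_le_mul_of_nonneg_left _ (norm_nonneg A)
              rw [norm_sub_rev]
              exact h2
          _ ≤ (2 * L * η * σ ^ 2) * ‖a - b‖ := by
              have h3 : ‖A‖ * (L * ρ) ≤ 2 * L * η * σ ^ 2 := by
                rw [hρ]
                nlinarith [mul_nonneg (sub_nonneg.mpr hAσ)
                    (mul_nonneg hL.le (mul_nonneg hσ0 hd0)),
                  mul_nonneg (mul_nonneg hL.le (mul_nonneg hσ0 hσ0))
                    (sub_nonneg.mpr hdη.le)]
              rw [← mul_assoc]
              exact mul_le_mul_of_nonneg_right h3 (norm_nonneg _)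
    obtain ⟨z, hzmem, hzfix, -, -⟩ := ContractingWith.exists_fixedPoint'
      (Metric.isClosed_closedBall).isComplete hmaps hcontract (mem_closedBall_self hρ0)
      (edist_ne_top _ _)
    refine ⟨z, hsub hzmem, ?_⟩
    have hz0 : A (f z - y) = 0 := by
      have h : z - A (f z - y) = z := hzfix
      exact sub_eq_self.mp h
    have : f z - y = 0 := by
      have := hA₂ (f z - y)
      rw [hz0, map_zero] at this
      exact this.symm
    exact sub_eq_zero.mp this
  -- define the local inverse
  set g : Y → X := fun y => if h : y ∈ ball (f x₀) η then (hex y h).choose else x₀ with hgdef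
  have hg_maps : Set.MapsTo g (ball (f x₀) η) (ball x₀ r) := by
    intro y hy
    have : g y = (hex y hy).choose := by rw [hgdef]; simp only [dif_pos hy]
    rw [this]
    exact (hex y hy).choose_spec.1
  have hg_inv : ∀ y ∈ ball (f x₀) η, f (g y) = y := by
    intro y hy
    have : g y = (hex y hy).choose := by rw [hgdef]; simp only [dif_pos hy]
    rw [this]
    exact (hex y hy).choose_spec.2
  have hy₀mem : f x₀ ∈ ball (f x₀) η := mem_ball_self hη
  have hg_x₀ : g (f x₀) = x₀ :=
    hinj _ (hg_maps hy₀mem) _ hx₀r (hg_inv _ hy₀mem)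
  -- smoothness
  have hcd : ∀ y ∈ ball (f x₀) η, ContDiffAt ℝ 1 g y := by
    intro y hy
    have hxball : g y ∈ ball x₀ r := hg_maps hy
    have hfx : f (g y) = y := hg_inv y hy
    set x : X := g y with hxdef
    have hxU : x ∈ U := hball hxball
    have hfC : ContDiffAt ℝ 1 f x :=
      contDiffAt_one_iff.mpr ⟨f', U, hU.mem_nhds hxU, hcont, hderiv⟩
    -- the derivative at x is invertible
    set t : X →L[ℝ] X := A.comp (f' x₀ - f' x) with htdef
    have htnorm : ‖t‖ < 1 := by
      have hxr : ‖x₀ - x‖ ≤ r := by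
        rw [norm_sub_rev]
        rw [mem_ball, dist_eq_norm] at hxball
        exact hxball.le
      calc ‖t‖ ≤ ‖A‖ * ‖f' x₀ - f' x‖ := A.opNorm_comp_le _
        _ ≤ σ * (L * r) := by
            apply mul_le_mul hAσ _ (norm_nonneg _) hσ0
            calc ‖f' x₀ - f' x‖ ≤ L * ‖x₀ - x‖ := hLip _ hx₀r _ hxball
              _ ≤ L * r := mul_le_mul_of_nonneg_left hxr hL.le
        _ = 2 * L * η * σ ^ 2 := by rw [hr]; ring
        _ < 1 := hsmall
    set u : (X →L[ℝ] X)ˣ := Units.oneSub t htnorm with hudef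
    have huval : (u : X →L[ℝ] X) = 1 - t := rfl
    have hfactor : ∀ w, (f' x) w = (f' x₀) ((u : X →L[ℝ] X) w) := by
      intro w
      rw [huval, ContinuousLinearMap.sub_apply, ContinuousLinearMap.one_apply, map_sub,
        htdef, ContinuousLinearMap.comp_apply, hA₂, ContinuousLinearMap.sub_apply]
      abel
    set B : Y →L[ℝ] X := ((u⁻¹ : (X →L[ℝ] X)ˣ) : X →L[ℝ] X).comp A with hBdef
    have hB₁ : Function.LeftInverse B (f' x) := by
      intro w
      have h1 : B ((f' x) w) = ((u⁻¹ : (X →L[ℝ] X)ˣ) * (u : (X →L[ℝ] X)ˣ) : X →L[ℝ] X) w := by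
        rw [hBdef, ContinuousLinearMap.comp_apply, hfactor, hA₁,
          ContinuousLinearMap.mul_apply]
      rw [h1, u.inv_mul, ContinuousLinearMap.one_apply]
    have hB₂ : Function.RightInverse B (f' x) := by
      intro w
      have h1 : (f' x) (B w) = (f' x₀) (((u : (X →L[ℝ] X)ˣ) * (u⁻¹ : (X →L[ℝ] X)ˣ) : X →L[ℝ] X) (A w)) := by
        rw [hfactor, hBdef, ContinuousLinearMap.comp_apply, ContinuousLinearMap.mul_apply]
      rw [h1, u.mul_inv, ContinuousLinearMap.one_apply, hA₂]
    set E : X ≃L[ℝ] Y := ContinuousLinearEquiv.equivOfInverse (f' x) B hB₁ hB₂ with hEdef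
    have hEcoe : (E : X →L[ℝ] Y) = f' x := by
      ext w
      rw [hEdef]
      rfl
    have hdx : HasFDerivAt f (E : X →L[ℝ] Y) x := by
      rw [hEcoe]
      exact hderiv x hxU
    have S := hfC.hasStrictFDerivAt' hdx one_ne_zero
    have h1 : ∀ᶠ z in nhds y, f (S.localInverse f E x z) = z := by
      have h := S.eventually_right_inverse
      rwa [hfx] at h
    have h2 : ∀ᶠ z in nhds y, S.localInverse f E x z ∈ ball x₀ r := by
      have hc := S.localInverse_continuousAt
      rw [hfx] at hc
      have hmem : S.localInverse f E x y ∈ ball x₀ r := by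
        rw [← hfx, S.localInverse_apply_image]
        exact hxball
      exact hc.eventually (isOpen_ball.eventually_mem hmem)
    have h3 : ∀ᶠ z in nhds y, z ∈ ball (f x₀) η := isOpen_ball.eventually_mem hy
    have heqv : g =ᶠ[nhds y] S.localInverse f E x := by
      filter_upwards [h1, h2, h3] with z hz1 hz2 hz3
      exact hinj _ (hg_maps hz3) _ hz2 (by rw [hg_inv z hz3, hz1])
    have hCD : ContDiffAt ℝ 1 (S.localInverse f E x) y := by
      have h := hfC.to_localInverse hdx one_ne_zero
      rwa [hfx] at h
    exact hCD.congr_of_eventuallyEq heqv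
  refine ⟨g, ⟨fun y hy => (hcd y hy).contDiffWithinAt, hg_maps, hg_x₀, hg_inv⟩, ?_⟩
  rintro g₂ ⟨-, hmaps₂, -, hinv₂⟩ y hy
  exact hinj _ (hmaps₂ hy) _ (hg_maps hy) (by rw [hinv₂ y hy, hg_inv y hy])
end

section
/- Existence of a zero from the quantitative inverse function theorem: Let X and Y be Banach spaces, U ⊆ X open, and f : X → Y continuously Fréchet differentiable on U. Let x₀ ∈ U, y₀ = f(x₀), and η, σ, L > 0 satisfy: ‖y₀‖_Y < η; δf(x₀) is an invertible bounded linear map with ‖δf(x₀)⁻¹‖ < σ; B_{2ησ}(x₀) ⊆ U; δf is Lipschitz continuous on B_{2ησ}(x₀) with Lipschitz constant L; and 2Lησ² < 1. Then there exists x̄ ∈ X with f(x̄) = 0 and ‖x₀ − x̄‖_X < 2ησ. -/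
open Metric Set

/-- Existence of a zero from the quantitative inverse function theorem: under
quantitative bounds on the residual `‖f x₀‖ < η`, the inverse of the derivative
`‖δf(x₀)⁻¹‖ < σ`, the Lipschitz constant `L` of the derivative on `B_{2ησ}(x₀) ⊆ U`,
and the smallness condition `2Lησ² < 1`, there exists `x̄` with `f x̄ = 0` and
`‖x₀ − x̄‖ < 2ησ`. -/
theorem exists_zero_of_quantitative_inverse_function_theorem
    {X Y : Type*} [NormedAddCommGroup X] [NormedSpace ℝ X] [CompleteSpace X]
    [NormedAddCommGroup Y] [NormedSpace ℝ Y] [CompleteSpace Y]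
    (U : Set X) (hU : IsOpen U)
    (f : X → Y) (f' : X → X →L[ℝ] Y)
    (hderiv : ∀ x ∈ U, HasFDerivAt f (f' x) x)
    (hcont : ContinuousOn f' U)
    (x₀ : X) (hx₀ : x₀ ∈ U)
    (η σ L : ℝ) (hη : 0 < η) (hσ : 0 < σ) (hL : 0 < L)
    (hres : ‖f x₀‖ < η)
    (A : Y →L[ℝ] X)
    (hA₁ : ∀ x : X, A (f' x₀ x) = x) (hA₂ : ∀ y : Y, f' x₀ (A y) = y)
    (hAnorm : ‖A‖ < σ)
    (hball : ball x₀ (2 * η * σ) ⊆ U)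
    (hLip : ∀ u ∈ ball x₀ (2 * η * σ), ∀ v ∈ ball x₀ (2 * η * σ),
      ‖f' u - f' v‖ ≤ L * ‖u - v‖)
    (hsmall : 2 * L * η * σ ^ 2 < 1) :
    ∃ x' : X, f x' = 0 ∧ ‖x₀ - x'‖ < 2 * η * σ := by
  have hc : (0:ℝ) < 2 * η * σ := by positivity
  have hq0 : (0:ℝ) < 2 * L * η * σ ^ 2 := by positivity
  obtain ⟨r, hr0, hrc, hkey⟩ :
      ∃ r : ℝ, 0 < r ∧ r < 2 * η * σ ∧ σ * L / 2 * r ^ 2 + σ * η = r := by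
    have hs0 : 0 < Real.sqrt (1 - 2 * L * η * σ ^ 2) := Real.sqrt_pos.2 (by linarith)
    set s : ℝ := Real.sqrt (1 - 2 * L * η * σ ^ 2) with hs_def
    have hs_sq : s ^ 2 = 1 - 2 * L * η * σ ^ 2 := Real.sq_sqrt (by linarith)
    set t : ℝ := 1 / (1 + s) with ht_def
    have h1s : (0:ℝ) < 1 + s := by linarith
    have ht0 : 0 < t := by positivity
    have hs1 : s < 1 := by nlinarith
    have ht1 : t < 1 := by rw [ht_def, div_lt_one h1s]; linarith
    have ht_eq : (2 * L * η * σ ^ 2) * t ^ 2 - 2 * t + 1 = 0 := by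
      rw [ht_def]
      field_simp
      nlinarith [hs_sq]
    refine ⟨2 * η * σ * t, by positivity, by nlinarith, by nlinarith [ht_eq]⟩
  -- the Newton map
  set g : X → X := fun x => x - A (f x) with hg_def
  set G : X → X →L[ℝ] X := fun z => ContinuousLinearMap.id ℝ X - (A.comp (f' z)) with hG_def
  have hGderiv : ∀ z ∈ ball x₀ (2 * η * σ), HasFDerivAt g (G z) z := by
    intro z hz
    exact (hasFDerivAt_id z).sub ((A.hasFDerivAt).comp z (hderiv z (hball hz)))
  have hGnorm : ∀ z ∈ ball x₀ (2 * η * σ), ‖G z‖ ≤ ‖A‖ * (L * ‖z - x₀‖) := by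
    intro z hz
    have hGz : G z = A.comp (f' x₀ - f' z) := by
      ext v
      simp [hG_def, hA₁ v]
    rw [hGz]
    calc ‖A.comp (f' x₀ - f' z)‖ ≤ ‖A‖ * ‖f' x₀ - f' z‖ := A.opNorm_comp_le _
      _ ≤ ‖A‖ * (L * ‖z - x₀‖) := by
          have := hLip x₀ (mem_ball_self hc) z hz
          rw [norm_sub_rev x₀ z] at this
          exact mul_le_mul_of_nonneg_left this (norm_nonneg A)
  have hsub : closedBall x₀ r ⊆ ball x₀ (2 * η * σ) := closedBall_subset_ball hrc
  -- quadratic estimate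
  have hquad : ∀ x ∈ closedBall x₀ r, ‖g x - g x₀‖ ≤ ‖A‖ * L / 2 * ‖x - x₀‖ ^ 2 := by
    intro x hx
    set v : X := x - x₀ with hv_def
    have hv : ‖v‖ ≤ r := by
      rw [hv_def, ← dist_eq_norm]; exact mem_closedBall.1 hx
    have hmem : ∀ τ ∈ Icc (0:ℝ) 1, x₀ + τ • v ∈ ball x₀ (2 * η * σ) := by
      intro τ hτ
      rw [mem_ball, dist_eq_norm]
      have h1 : x₀ + τ • v - x₀ = τ • v := by abel
      rw [h1, norm_smul, Real.norm_eq_abs, abs_of_nonneg hτ.1]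
      calc τ * ‖v‖ ≤ 1 * ‖v‖ := mul_le_mul_of_nonneg_right hτ.2 (norm_nonneg v)
        _ = ‖v‖ := one_mul _
        _ ≤ r := hv
        _ < 2 * η * σ := hrc
    set h : ℝ → X := fun τ => g (x₀ + τ • v) with hh_def
    have hh : ∀ τ ∈ Icc (0:ℝ) 1, HasDerivAt h (G (x₀ + τ • v) v) τ := by
      intro τ hτ
      have hcurve : HasDerivAt (fun τ : ℝ => x₀ + τ • v) v τ := by
        simpa using ((hasDerivAt_id τ).smul_const v).const_add x₀
      exact (hGderiv _ (hmem τ hτ)).comp_hasDerivAt τ hcurve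
    set C : ℝ := ‖A‖ * L * ‖v‖ ^ 2 with hC_def
    have hC0 : 0 ≤ C := by positivity
    have hcontOn : ContinuousOn (fun τ => h τ - h 0) (Icc (0:ℝ) 1) := fun τ hτ =>
      ((hh τ hτ).continuousAt.continuousWithinAt).sub continuousWithinAt_const
    have hderivOn : ∀ τ ∈ Ico (0:ℝ) 1,
        HasDerivWithinAt (fun τ => h τ - h 0) (G (x₀ + τ • v) v) (Ici τ) τ := fun τ hτ =>
      ((hh τ (Ico_subset_Icc_self hτ)).sub_const (h 0)).hasDerivWithinAt
    have hB : ∀ τ : ℝ, HasDerivAt (fun τ : ℝ => C * (τ ^ 2 / 2)) (C * τ) τ := by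
      intro τ
      have h3 := ((hasDerivAt_pow 2 τ).div_const 2).const_mul C
      refine h3.congr_deriv ?_
      push_cast
      ring
    have ha : ‖h 0 - h 0‖ ≤ C * ((0:ℝ) ^ 2 / 2) := by simp
    have hbound : ∀ τ ∈ Ico (0:ℝ) 1, ‖G (x₀ + τ • v) v‖ ≤ C * τ := by
      intro τ hτ
      have h1 : x₀ + τ • v - x₀ = τ • v := by abel
      calc ‖G (x₀ + τ • v) v‖ ≤ ‖G (x₀ + τ • v)‖ * ‖v‖ := (G _).le_opNorm v
        _ ≤ (‖A‖ * (L * ‖x₀ + τ • v - x₀‖)) * ‖v‖ :=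
            mul_le_mul_of_nonneg_right (hGnorm _ (hmem τ (Ico_subset_Icc_self hτ)))
              (norm_nonneg v)
        _ = C * τ := by
            rw [h1, norm_smul, Real.norm_eq_abs, abs_of_nonneg hτ.1, hC_def]; ring
    have key := image_norm_le_of_norm_deriv_right_le_deriv_boundary hcontOn hderivOn ha hB hbound
    have h1v : x₀ + (1:ℝ) • v = x := by rw [one_smul, hv_def]; abel
    have := key (right_mem_Icc.2 zero_le_one)
    simp only [hh_def, h1v, zero_smul, add_zero, one_pow] at this
    calc ‖g x - g x₀‖ ≤ C * (1 / 2) := this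
      _ = ‖A‖ * L / 2 * ‖v‖ ^ 2 := by rw [hC_def]; ring
  -- self-map
  have hself : MapsTo g (closedBall x₀ r) (closedBall x₀ r) := by
    intro x hx
    have hx' : ‖x - x₀‖ ≤ r := by rw [← dist_eq_norm]; exact mem_closedBall.1 hx
    have h1 : ‖g x₀ - x₀‖ = ‖A (f x₀)‖ := by
      rw [hg_def]; simp
    have h2 : ‖A (f x₀)‖ ≤ ‖A‖ * ‖f x₀‖ := A.le_opNorm _
    have h3 := hquad x hx
    rw [mem_closedBall, dist_eq_norm]
    have e1 : ‖A‖ * L / 2 * ‖x - x₀‖ ^ 2 ≤ σ * L / 2 * r ^ 2 := by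
      have q1 : ‖A‖ * L / 2 ≤ σ * L / 2 := by nlinarith [norm_nonneg A]
      have q2 : ‖x - x₀‖ ^ 2 ≤ r ^ 2 := pow_le_pow_left₀ (norm_nonneg _) hx' 2
      exact mul_le_mul q1 q2 (by positivity) (by positivity)
    have e2 : ‖A‖ * ‖f x₀‖ ≤ σ * η := mul_le_mul hAnorm.le hres.le (norm_nonneg _) hσ.le
    calc ‖g x - x₀‖ ≤ ‖g x - g x₀‖ + ‖g x₀ - x₀‖ := norm_sub_le_norm_sub_add_norm_sub _ _ _
      _ ≤ ‖A‖ * L / 2 * ‖x - x₀‖ ^ 2 + ‖A‖ * ‖f x₀‖ := by rw [h1]; exact add_le_add h3 h2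
      _ ≤ σ * L / 2 * r ^ 2 + σ * η := add_le_add e1 e2
      _ = r := hkey
  -- contraction
  have hKpos : 0 ≤ σ * L * r := by positivity
  set K : NNReal := Real.toNNReal (σ * L * r) with hK_def
  have hKcoe : (K : ℝ) = σ * L * r := Real.coe_toNNReal _ hKpos
  have hK1 : (K : ℝ) < 1 := by
    rw [hKcoe]
    nlinarith [mul_lt_mul_of_pos_left hrc (mul_pos hσ hL)]
  have hlips : LipschitzOnWith K g (closedBall x₀ r) := by
    rw [lipschitzOnWith_iff_dist_le_mul]
    intro x hx y hy
    rw [dist_eq_norm, dist_eq_norm, hKcoe]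
    apply (convex_closedBall x₀ r).norm_image_sub_le_of_norm_hasFDerivWithin_le
      (fun z hz => (hGderiv z (hsub hz)).hasFDerivWithinAt) _ hy hx
    intro z hz
    calc ‖G z‖ ≤ ‖A‖ * (L * ‖z - x₀‖) := hGnorm z (hsub hz)
      _ ≤ σ * (L * r) := by
          have hz' : ‖z - x₀‖ ≤ r := by rw [← dist_eq_norm]; exact mem_closedBall.1 hz
          exact mul_le_mul hAnorm.le (mul_le_mul_of_nonneg_left hz' hL.le) (by positivity) hσ.le
      _ = σ * L * r := by ring
  have hcontr : ContractingWith K (hself.restrict g _ _) :=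
    ⟨by exact_mod_cast hK1, hself.lipschitzOnWith_iff_restrict.1 hlips⟩
  obtain ⟨x', hx's, hfix, -, -⟩ := hcontr.exists_fixedPoint'
    (isClosed_closedBall.isComplete) hself (mem_closedBall_self hr0.le) (edist_ne_top _ _)
  have hAf : A (f x') = 0 := by
    have : x' - A (f x') = x' := hfix
    have := sub_eq_self.1 this
    exact this
  refine ⟨x', ?_, ?_⟩
  · have : f x' = f' x₀ (A (f x')) := (hA₂ (f x')).symm
    rw [hAf, map_zero] at this
    exact this
  · have : dist x' x₀ ≤ r := mem_closedBall.1 hx's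
    rw [dist_eq_norm] at this
    rw [norm_sub_rev]
    exact lt_of_le_of_lt this hrc
end
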